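/- Let 𝔩 : Ω₊ → ℝ be differentiable on the cone of symmetric positive definite matrices with gradient 𝔩'(x) = (1/2)(c x⁻¹ + x⁻¹ c) for a fixed symmetric matrix c, and suppose x 𝔩'(y) y + y 𝔩'(y) x = 2 x 𝔩'(x) x for all x, y ∈ Ω₊. Then c is a scalar multiple of the identity, hence 𝔩'(x) = κ x⁻¹ for some κ ∈ ℝ. -/

import Mathlib

open Matrix in
private lemma gradient_scalar_aux_posDef {r : ℕ} (i j : Fin r) (hij : i ≠ j) :
    (1 + (1/2:ℝ) • (Matrix.single i j (1:ℝ) + Matrix.single j i 1)).PosDef := by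
  have hSh : (Matrix.single i j (1:ℝ) + Matrix.single j i 1)ᴴ
      = Matrix.single i j (1:ℝ) + Matrix.single j i 1 := by
    ext a b
    simp only [Matrix.conjTranspose_apply, Matrix.add_apply, Matrix.single,
      Matrix.of_apply, star_trivial]
    by_cases h1 : a = i <;> by_cases h2 : b = j <;> by_cases h3 : a = j <;>
      by_cases h4 : b = i <;> simp_all [And.comm, add_comm]
  rw [Matrix.posDef_iff_dotProduct_mulVec]
  constructor
  · show _ = _
    rw [Matrix.conjTranspose_add, Matrix.conjTranspose_smul, Matrix.conjTranspose_one,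
      star_trivial, hSh]
  · intro x hx
    have hmv : (1 + (1/2:ℝ) • (Matrix.single i j (1:ℝ) + Matrix.single j i 1)) *ᵥ x
        = x + (1/2:ℝ) • (Function.update (0 : Fin r → ℝ) i (1 * x j)
            + Function.update (0 : Fin r → ℝ) j (1 * x i)) := by
      rw [Matrix.add_mulVec, Matrix.one_mulVec, Matrix.smul_mulVec,
        Matrix.add_mulVec, Matrix.single_mulVec, Matrix.single_mulVec]
    rw [hmv]
    have hupd : ∀ (k : Fin r) (a : ℝ),
        Function.update (0 : Fin r → ℝ) k a = Pi.single k a := fun _ _ => rfl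
    rw [hupd, hupd, star_trivial, dotProduct_add, dotProduct_smul, dotProduct_add,
      dotProduct_single, dotProduct_single]
    have hQpos : 0 < x ⬝ᵥ x := by
      obtain ⟨k, hk⟩ := Function.ne_iff.mp hx
      exact Finset.sum_pos' (fun m _ => mul_self_nonneg (x m))
        ⟨k, Finset.mem_univ k, mul_self_pos.mpr hk⟩
    have hsub : x i * x i + x j * x j ≤ x ⬝ᵥ x := by
      have h := Finset.sum_le_sum_of_subset_of_nonneg
        (Finset.subset_univ ({i, j} : Finset (Fin r)))
        (fun k _ _ => mul_self_nonneg (x k))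
      rwa [Finset.sum_pair hij] at h
    simp only [smul_eq_mul, one_mul, Pi.smul_apply]
    nlinarith [sq_nonneg (x i + x j), hQpos, hsub]

open Matrix in
/-- If the gradient of `𝔩` on the cone of symmetric positive definite matrices
is `𝔩'(x) = (1/2)(c x⁻¹ + x⁻¹ c)` for a fixed symmetric matrix `c`, and
`x 𝔩'(y) y + y 𝔩'(y) x = 2 x 𝔩'(x) x` for all positive definite `x, y`,
then `c` is a scalar multiple of the identity and `𝔩'(x) = κ x⁻¹`. -/
theorem gradient_scalar {r : ℕ} (c : Matrix (Fin r) (Fin r) ℝ) (hc : c.IsSymm)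
    (l' : Matrix (Fin r) (Fin r) ℝ → Matrix (Fin r) (Fin r) ℝ)
    (hl' : ∀ x : Matrix (Fin r) (Fin r) ℝ, x.PosDef →
      l' x = (1 / 2 : ℝ) • (c * x⁻¹ + x⁻¹ * c))
    (heq : ∀ x y : Matrix (Fin r) (Fin r) ℝ, x.PosDef → y.PosDef →
      x * l' y * y + y * l' y * x = (2 : ℝ) • (x * l' x * x)) :
    ∃ κ : ℝ, c = κ • (1 : Matrix (Fin r) (Fin r) ℝ) ∧
      ∀ x : Matrix (Fin r) (Fin r) ℝ, x.PosDef → l' x = κ • x⁻¹ := by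
  classical
  -- Master relation: c y² + y² c = 2 y c y for all positive definite y
  have key : ∀ y : Matrix (Fin r) (Fin r) ℝ, y.PosDef →
      c * (y * y) + (y * y) * c = (2:ℝ) • (y * c * y) := by
    intro y hy
    have hd : IsUnit y.det := isUnit_iff_ne_zero.mpr hy.det_pos.ne'
    have h1 : y * y⁻¹ = 1 := y.mul_nonsing_inv hd
    have h2 : y⁻¹ * y = 1 := y.nonsing_inv_mul hd
    have hone : (1 : Matrix (Fin r) (Fin r) ℝ).PosDef := Matrix.PosDef.one
    have h3 := heq 1 y hone hy
    rw [hl' 1 hone, hl' y hy] at h3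
    simp only [inv_one, one_mul, mul_one] at h3
    have h4 := congrArg (fun m => y * m * y) h3
    simp only [mul_add, add_mul, smul_mul_assoc, mul_smul_comm, smul_smul, smul_add,
      mul_assoc] at h4 ⊢
    rw [show y⁻¹ * (y * y) = y by rw [← mul_assoc, h2, one_mul],
        show y * (y⁻¹ * (c * (y * y))) = c * (y * y) by rw [← mul_assoc, h1, one_mul],
        show y * (y * (c * (y⁻¹ * y))) = y * (y * c) by rw [h2, mul_one],
        show y * (y * (y⁻¹ * (c * y))) = y * (c * y) by
          rw [← mul_assoc y y⁻¹, h1, one_mul]] at h4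
    linear_combination (norm := module) (2:ℝ) • h4
  -- Off-diagonal entries of c vanish
  have hoff : ∀ i j : Fin r, i ≠ j → c i j = 0 := by
    intro i j hij
    set d : Fin r → ℝ := fun k => if k = i then 2 else 1 with hd
    have hdpos : ∀ k, 0 < d k := by
      intro k; by_cases h : k = i <;> simp [hd, h]
    have h := key _ (Matrix.PosDef.diagonal hdpos)
    rw [Matrix.diagonal_mul_diagonal] at h
    have h2 := congrFun (congrFun h i) j
    have e2 := hij.symm
    simp [Matrix.add_apply, Matrix.smul_apply, Matrix.mul_diagonal, Matrix.diagonal_mul,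
      hd, hij, e2] at h2
    linarith
  -- All diagonal entries of c coincide
  have hdiag : ∀ i j : Fin r, i ≠ j → c i i = c j j := by
    intro i j hij
    obtain ⟨S, hS⟩ : ∃ S : Matrix (Fin r) (Fin r) ℝ,
        S = Matrix.single i j (1:ℝ) + Matrix.single j i 1 := ⟨_, rfl⟩
    have hy : (1 + (1/2:ℝ) • S).PosDef := hS ▸ gradient_scalar_aux_posDef i j hij
    have h := key _ hy
    have hSS : S * S = Matrix.single i i (1:ℝ) + Matrix.single j j 1 := by
      have h1 := hij
      have h2 := hij.symm
      simp [hS, add_mul, mul_add, h1, h2, add_comm]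
    simp only [mul_add, add_mul, mul_one, one_mul, smul_mul_assoc, mul_smul_comm, smul_add,
      smul_smul, hSS, mul_assoc] at h
    have h2 := congrFun (congrFun h i) i
    have e1 := hij
    have e2 := hij.symm
    simp [hS, mul_add, add_mul, Matrix.add_apply, Matrix.smul_apply, smul_eq_mul, e1, e2] at h2
    linarith
  -- Assemble
  by_cases hr : r = 0
  · refine ⟨0, ?_, ?_⟩
    · subst hr; ext k l; exact k.elim0
    · intro x hx; subst hr; ext k l; exact k.elim0
  · have hr' : 0 < r := Nat.pos_of_ne_zero hr
    set i0 : Fin r := ⟨0, hr'⟩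
    have hceq : c = (c i0 i0) • (1 : Matrix (Fin r) (Fin r) ℝ) := by
      ext k l
      by_cases hkl : k = l
      · subst hkl
        by_cases hk : k = i0
        · subst hk; simp [Matrix.smul_apply, Matrix.one_apply]
        · rw [hdiag k i0 hk]; simp [Matrix.smul_apply, Matrix.one_apply]
      · rw [hoff k l hkl]; simp [Matrix.smul_apply, Matrix.one_apply, hkl]
    obtain ⟨κ, hκ⟩ : ∃ κ : ℝ, c = κ • (1 : Matrix (Fin r) (Fin r) ℝ) := ⟨_, hceq⟩
    refine ⟨κ, hκ, fun x hx => ?_⟩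
    rw [hl' x hx, hκ]
    simp only [smul_mul_assoc, mul_smul_comm, one_mul, mul_one, smul_smul]
    module
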